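/- arXiv:2507.06152 — 2 statements merged into one kernel-verified Lean document; each statement's English description precedes it below -/
import Mathlib

section
/- (Painless hybrid filterbank) Let ψ_1,…,ψ_M satisfy ψ̂_j[k] = 1 for k ∈ [jL/d, jL/d + L/d − 1] and 0 otherwise (indices mod L), and let w_1,…,w_M ∈ ℂ^L be arbitrary. Then the hybrid filterbank {(ψ_j ∗ w_j)_{j=1}^M, ↓_d} has aliasing terms G_n ≡ 0 for all n ≥ 1, and G_0[k] = d^{−1}|ŵ_{⌊kd/L⌋}[k]|². Consequently it is a g-frame for ℂ^L if and only if min_k |ŵ_{⌊kd/L⌋}[k]| > 0, and a tight g-frame if and only if |ŵ_{⌊kd/L⌋}[k]| is a nonzero constant over all k. -/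
open scoped BigOperators

noncomputable def dft (L : ℕ) [NeZero L] (x : ZMod L → ℂ) (k : ZMod L) : ℂ :=
  (Real.sqrt L)⁻¹ * ∑ ℓ : ZMod L, x ℓ *
    Complex.exp (-(2 * Real.pi * Complex.I * (ZMod.val k : ℂ) * (ZMod.val ℓ : ℂ)) / (L : ℂ))

noncomputable def conv (L : ℕ) [NeZero L] (x w : ZMod L → ℂ) (n : ZMod L) : ℂ :=
  ∑ ℓ : ZMod L, x ℓ * w (n - ℓ)

noncomputable def zet (L : ℕ) : ℂ := Complex.exp (-(2 * Real.pi * Complex.I) / L)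

lemma zet_pow_L (L : ℕ) [NeZero L] : zet L ^ L = 1 := by
  rw [zet, ← Complex.exp_nat_mul]
  have hL : (L : ℂ) ≠ 0 := Nat.cast_ne_zero.2 (NeZero.ne L)
  rw [show (L : ℂ) * (-(2 * Real.pi * Complex.I) / L) = -(2 * Real.pi * Complex.I) by
    field_simp]
  simpa using Complex.exp_int_mul_two_pi_mul_I (-1)

lemma zet_prim (L : ℕ) [NeZero L] : IsPrimitiveRoot (zet L) L := by
  have h := Complex.isPrimitiveRoot_exp L (NeZero.ne L)
  have : zet L = (Complex.exp (2 * Real.pi * Complex.I / L))⁻¹ := by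
    rw [zet, ← Complex.exp_neg]; ring_nf
  rw [this]
  exact h.inv

lemma zet_pow_mod (L : ℕ) [NeZero L] (a : ℕ) : zet L ^ a = zet L ^ (a % L) := by
  conv_lhs => rw [← Nat.div_add_mod a L]
  rw [pow_add, pow_mul, zet_pow_L, one_pow, one_mul]

lemma zet_pow_modeq (L : ℕ) [NeZero L] {a b : ℕ} (h : a ≡ b [MOD L]) :
    zet L ^ a = zet L ^ b := by
  rw [zet_pow_mod L a, zet_pow_mod L b, h]

lemma conj_zet_pow (L : ℕ) [NeZero L] (a : ℕ) :
    (starRingEnd ℂ) (zet L ^ a) = zet L ^ (a * (L - 1)) := by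
  have h1 : (starRingEnd ℂ) (zet L) = (zet L)⁻¹ := by
    rw [zet, ← Complex.exp_conj, ← Complex.exp_neg]
    congr 1
    simp only [map_div₀, map_neg, map_mul, Complex.conj_I, Complex.conj_ofReal, map_ofNat,
      map_natCast]
    ring
  have hL : 1 ≤ L := Nat.one_le_iff_ne_zero.2 (NeZero.ne L)
  have hmul : zet L ^ (L - 1) * zet L = 1 := by
    rw [← pow_succ, Nat.sub_add_cancel hL, zet_pow_L]
  have h2 : (zet L)⁻¹ = zet L ^ (L - 1) := inv_eq_of_mul_eq_one_left hmul
  rw [map_pow, h1, h2, ← pow_mul, Nat.mul_comm]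

lemma abs_zet (L : ℕ) [NeZero L] : ‖zet L‖ = 1 := by
  have : -(2 * (Real.pi:ℂ) * Complex.I) / L = ((-(2 * Real.pi) / L : ℝ) : ℂ) * Complex.I := by
    push_cast; ring
  rw [zet, this, Complex.norm_exp_ofReal_mul_I]
lemma val_cast_eq_self (L : ℕ) [NeZero L] (a : ZMod L) : ((ZMod.val a : ℕ) : ZMod L) = a :=
  ZMod.natCast_rightInverse a

lemma sum_zmod_val (L : ℕ) [NeZero L] (f : ℕ → ℂ) :
    ∑ ℓ : ZMod L, f (ZMod.val ℓ) = ∑ i ∈ Finset.range L, f i := by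
  apply Finset.sum_nbij' (fun ℓ => ZMod.val ℓ) (fun i => (i : ZMod L))
  · intro a _; exact Finset.mem_range.2 (ZMod.val_lt a)
  · intro a _; exact Finset.mem_univ _
  · intro a _; exact val_cast_eq_self L a
  · intro i hi; exact ZMod.val_cast_of_lt (Finset.mem_range.1 hi)
  · intro a _; rfl

lemma dft_eq (L : ℕ) [NeZero L] (x : ZMod L → ℂ) (k : ZMod L) :
    dft L x k = (Real.sqrt L : ℂ)⁻¹ * ∑ ℓ : ZMod L, x ℓ * zet L ^ (ZMod.val k * ZMod.val ℓ) := by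
  rw [dft, Complex.ofReal_inv]
  congr 1
  apply Finset.sum_congr rfl
  intro ℓ _
  congr 1
  rw [zet, ← Complex.exp_nat_mul]
  congr 1
  push_cast
  ring

lemma char_sum (L : ℕ) [NeZero L] (a : ℕ) :
    ∑ ℓ : ZMod L, zet L ^ (a * ZMod.val ℓ) = if (a : ZMod L) = 0 then (L : ℂ) else 0 := by
  have : ∑ ℓ : ZMod L, zet L ^ (a * ZMod.val ℓ) = ∑ i ∈ Finset.range L, (zet L ^ a) ^ i := by
    rw [sum_zmod_val L (fun m => zet L ^ (a * m))]
    exact Finset.sum_congr rfl fun i _ => (pow_mul _ a i)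
  rw [this]
  by_cases h : (a : ZMod L) = 0
  · have hdvd : L ∣ a := (ZMod.natCast_eq_zero_iff a L).1 h
    have : zet L ^ a = 1 := (zet_prim L).pow_eq_one_iff_dvd a |>.2 hdvd
    simp [this, h]
  · have hdvd : ¬ L ∣ a := fun hh => h ((ZMod.natCast_eq_zero_iff a L).2 hh)
    have hne : zet L ^ a ≠ 1 := fun hh => hdvd (((zet_prim L).pow_eq_one_iff_dvd a).1 hh)
    rw [geom_sum_eq hne, if_neg h]
    have : (zet L ^ a) ^ L = 1 := by rw [← pow_mul, Nat.mul_comm, pow_mul, zet_pow_L, one_pow]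
    rw [this]
    simp

lemma dft_inv (L : ℕ) [NeZero L] (x : ZMod L → ℂ) (n : ZMod L) :
    x n = (Real.sqrt L : ℂ)⁻¹ *
      ∑ k : ZMod L, dft L x k * (starRingEnd ℂ) (zet L ^ (ZMod.val k * ZMod.val n)) := by
  have hL0 : (0:ℝ) < L := Nat.cast_pos.2 (Nat.pos_of_ne_zero (NeZero.ne L))
  symm
  calc (Real.sqrt L : ℂ)⁻¹ *
      ∑ k : ZMod L, dft L x k * (starRingEnd ℂ) (zet L ^ (ZMod.val k * ZMod.val n))
      = (Real.sqrt L : ℂ)⁻¹ * (Real.sqrt L : ℂ)⁻¹ *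
        ∑ k : ZMod L, ∑ ℓ : ZMod L, x ℓ *
          zet L ^ ((ZMod.val ℓ + ZMod.val n * (L-1)) * ZMod.val k) := by
        simp only [dft_eq, conj_zet_pow, Finset.mul_sum, Finset.sum_mul]
        apply Finset.sum_congr rfl; intro k _
        apply Finset.sum_congr rfl; intro ℓ _
        rw [show ((ZMod.val ℓ + ZMod.val n * (L-1)) * ZMod.val k)
            = ZMod.val k * ZMod.val ℓ + ZMod.val k * ZMod.val n * (L-1) from by ring, pow_add]
        ring
      _ = x n := by
        rw [Finset.sum_comm]
        have hterm : ∀ ℓ : ZMod L, ∑ k : ZMod L, x ℓ *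
            zet L ^ ((ZMod.val ℓ + ZMod.val n * (L-1)) * ZMod.val k)
            = x ℓ * (if ((ZMod.val ℓ + ZMod.val n * (L-1) : ℕ) : ZMod L) = 0 then (L:ℂ) else 0) := by
          intro ℓ
          rw [← Finset.mul_sum, char_sum]
        simp only [hterm]
        have hL1 : ((L - 1 : ℕ) : ZMod L) = -1 := by
          have hL : 1 ≤ L := Nat.one_le_iff_ne_zero.2 (NeZero.ne L)
          rw [Nat.cast_sub hL, ZMod.natCast_self, Nat.cast_one, zero_sub]
        have hcond : ∀ ℓ : ZMod L,
            (((ZMod.val ℓ + ZMod.val n * (L-1) : ℕ) : ZMod L) = 0) ↔ ℓ = n := by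
          intro ℓ
          rw [Nat.cast_add, Nat.cast_mul, hL1, val_cast_eq_self, val_cast_eq_self]
          constructor
          · intro h; have : ℓ = n := by linear_combination h
            exact this
          · intro h; subst h; ring
        have : ∀ ℓ : ZMod L, x ℓ *
            (if ((ZMod.val ℓ + ZMod.val n * (L-1) : ℕ) : ZMod L) = 0 then (L:ℂ) else 0)
            = if ℓ = n then x ℓ * L else 0 := by
          intro ℓ
          by_cases h : ℓ = n
          · rw [if_pos ((hcond ℓ).2 h), if_pos h]
          · rw [if_neg (fun hh => h ((hcond ℓ).1 hh)), if_neg h, mul_zero]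
        simp only [this]
        rw [Finset.sum_ite_eq' Finset.univ n (fun ℓ => x ℓ * L), if_pos (Finset.mem_univ n)]
        have hs : (Real.sqrt L : ℂ) * (Real.sqrt L : ℂ) = (L : ℂ) := by
          rw [← Complex.ofReal_mul, Real.mul_self_sqrt hL0.le]; exact Complex.ofReal_natCast L
        have hLne : (L : ℂ) ≠ 0 := Nat.cast_ne_zero.2 (NeZero.ne L)
        rw [← mul_inv, hs, mul_comm (x n) ((L:ℕ):ℂ), ← mul_assoc, inv_mul_cancel₀ hLne,
          one_mul]
lemma sqrtL_sq (L : ℕ) [NeZero L] : (Real.sqrt L : ℂ) * (Real.sqrt L : ℂ) = (L : ℂ) := by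
  have hL0 : (0:ℝ) ≤ L := Nat.cast_nonneg L
  rw [← Complex.ofReal_mul, Real.mul_self_sqrt hL0]; exact Complex.ofReal_natCast L

lemma sqrtL_ne (L : ℕ) [NeZero L] : (Real.sqrt L : ℂ) ≠ 0 := by
  have hL0 : (0:ℝ) < L := Nat.cast_pos.2 (Nat.pos_of_ne_zero (NeZero.ne L))
  simpa using Real.sqrt_ne_zero'.2 hL0

lemma zet_pow_val_add (L : ℕ) [NeZero L] (a : ℕ) (ℓ m : ZMod L) :
    zet L ^ (a * ZMod.val (ℓ + m)) = zet L ^ (a * ZMod.val ℓ) * zet L ^ (a * ZMod.val m) := by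
  rw [← pow_add, ← mul_add]
  apply zet_pow_modeq
  exact Nat.ModEq.mul_left a (by rw [ZMod.val_add]; exact (Nat.mod_modEq _ L))

lemma dft_conv (L : ℕ) [NeZero L] (x y : ZMod L → ℂ) (k : ZMod L) :
    dft L (conv L x y) k = (Real.sqrt L : ℂ) * dft L x k * dft L y k := by
  have h1 : ∀ ℓ : ZMod L, ∑ n : ZMod L, y (n - ℓ) * zet L ^ (ZMod.val k * ZMod.val n)
      = (∑ m : ZMod L, y m * zet L ^ (ZMod.val k * ZMod.val m)) * zet L ^ (ZMod.val k * ZMod.val ℓ) := by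
    intro ℓ
    rw [Finset.sum_mul]
    apply Fintype.sum_equiv (Equiv.subRight ℓ)
    intro n
    simp only [Equiv.subRight_apply]
    have h := zet_pow_val_add L (ZMod.val k) (n - ℓ) ℓ
    rw [sub_add_cancel] at h
    rw [h]; ring
  calc dft L (conv L x y) k
      = (Real.sqrt L : ℂ)⁻¹ * ∑ n : ZMod L, (∑ ℓ : ZMod L, x ℓ * y (n - ℓ)) *
          zet L ^ (ZMod.val k * ZMod.val n) := by rw [dft_eq]; rfl
    _ = (Real.sqrt L : ℂ)⁻¹ * ∑ ℓ : ZMod L, x ℓ *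
          ∑ n : ZMod L, y (n - ℓ) * zet L ^ (ZMod.val k * ZMod.val n) := by
        congr 1
        have : ∀ n : ZMod L, (∑ ℓ : ZMod L, x ℓ * y (n - ℓ)) * zet L ^ (ZMod.val k * ZMod.val n)
            = ∑ ℓ : ZMod L, x ℓ * (y (n - ℓ) * zet L ^ (ZMod.val k * ZMod.val n)) := by
          intro n; rw [Finset.sum_mul]; apply Finset.sum_congr rfl; intro ℓ _; ring
        simp only [this]
        rw [Finset.sum_comm]
        apply Finset.sum_congr rfl; intro ℓ _
        rw [Finset.mul_sum]
    _ = (Real.sqrt L : ℂ)⁻¹ * ∑ ℓ : ZMod L, (x ℓ * zet L ^ (ZMod.val k * ZMod.val ℓ)) *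
          (∑ m : ZMod L, y m * zet L ^ (ZMod.val k * ZMod.val m)) := by
        congr 1
        apply Finset.sum_congr rfl; intro ℓ _
        rw [h1 ℓ]; ring
    _ = (Real.sqrt L : ℂ) * dft L x k * dft L y k := by
        rw [dft_eq, dft_eq, ← Finset.sum_mul]
        have h := sqrtL_ne L
        field_simp

lemma geo_sum (N : ℕ) (ω : ℂ) (h : ω ^ N = 1) :
    ∑ m ∈ Finset.range N, ω ^ m = if ω = 1 then (N : ℂ) else 0 := by
  by_cases h1 : ω = 1
  · simp [h1]
  · rw [geom_sum_eq h1, h, if_neg h1]; simp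

lemma val_castHom (L q : ℕ) [NeZero L] [NeZero q] (hq : q ∣ L) (a : ZMod L) :
    ((ZMod.val a : ℕ) : ZMod q) = ZMod.castHom hq (ZMod q) a := by
  conv_rhs => rw [← val_cast_eq_self L a]
  rw [map_natCast]

lemma fiber_sum (L d q : ℕ) [NeZero L] (hq0 : 0 < q) (hL : L = d * q)
    (k : ZMod L) (f : ZMod L → ℂ) :
    ∑ k' : ZMod L, (if ((ZMod.val k' : ℕ) : ZMod q) = ((ZMod.val k : ℕ) : ZMod q)
        then f k' else 0)
      = ∑ n ∈ Finset.range d, f (k - ((n * q : ℕ) : ZMod L)) := by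
  haveI : NeZero q := ⟨hq0.ne'⟩
  have hqL : q ∣ L := ⟨d, by rw [hL, Nat.mul_comm]⟩
  have hdvd0 : ∀ a : ZMod L, (((ZMod.val a : ℕ) : ZMod q) = 0) ↔ q ∣ ZMod.val a := fun a =>
    ZMod.natCast_eq_zero_iff _ q
  rw [← Finset.sum_filter]
  apply Finset.sum_nbij' (fun k' => ZMod.val (k - k') / q) (fun n => k - ((n * q : ℕ) : ZMod L))
  · intro a _
    refine Finset.mem_range.2 ?_
    rw [Nat.div_lt_iff_lt_mul hq0, Nat.mul_comm d q] at *
    exact lt_of_lt_of_le (ZMod.val_lt _) (le_of_eq (by rw [hL, Nat.mul_comm]))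
  · intro n hn
    refine Finset.mem_filter.2 ⟨Finset.mem_univ _, ?_⟩
    rw [val_castHom L q hqL, val_castHom L q hqL, map_sub, map_natCast]
    have : ((n * q : ℕ) : ZMod q) = 0 := by
      rw [Nat.cast_mul, ZMod.natCast_self, mul_zero]
    rw [this, sub_zero]
  · intro a ha
    have hP := (Finset.mem_filter.1 ha).2
    have h0 : ((ZMod.val (k - a) : ℕ) : ZMod q) = 0 := by
      rw [val_castHom L q hqL, map_sub, ← val_castHom L q hqL, ← val_castHom L q hqL, hP,
        sub_self]
    have hdvd : q ∣ ZMod.val (k - a) := (hdvd0 _).1 h0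
    rw [Nat.div_mul_cancel hdvd, val_cast_eq_self, sub_sub_cancel]
  · intro n hn
    have hlt : n * q < L := by
      rw [hL]
      have := Finset.mem_range.1 hn
      calc n * q < d * q := by
            exact Nat.mul_lt_mul_of_lt_of_le this (le_refl q) hq0
        _ = d * q := rfl
    rw [sub_sub_cancel, ZMod.val_natCast, Nat.mod_eq_of_lt hlt, Nat.mul_div_cancel n hq0]
  · intro a ha
    have hP := (Finset.mem_filter.1 ha).2
    have h0 : ((ZMod.val (k - a) : ℕ) : ZMod q) = 0 := by
      rw [val_castHom L q hqL, map_sub, ← val_castHom L q hqL, ← val_castHom L q hqL, hP,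
        sub_self]
    have hdvd : q ∣ ZMod.val (k - a) := (hdvd0 _).1 h0
    rw [Nat.div_mul_cancel hdvd, val_cast_eq_self, sub_sub_cancel]

lemma sampled (L d : ℕ) [NeZero L] (hd : 0 < d) (hdL : d ∣ L) (y : ZMod L → ℂ) :
    ((∑ m ∈ Finset.range (L / d), ‖y ((d * m : ℕ) : ZMod L)‖ ^ 2 : ℝ) : ℂ)
    = (d : ℂ)⁻¹ * ∑ k : ZMod L, ∑ n ∈ Finset.range d,
        dft L y k * (starRingEnd ℂ) (dft L y (k - ((n * (L / d) : ℕ) : ZMod L))) := by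
  set q := L / d with hqdef
  have hL : L = d * q := (Nat.mul_div_cancel' hdL).symm
  have hL0 : L ≠ 0 := NeZero.ne L
  have hq0 : 0 < q := by
    rcases Nat.eq_zero_or_pos q with h | h
    · exact absurd (by rw [hL, h, Nat.mul_zero]) hL0
    · exact h
  haveI : NeZero q := ⟨hq0.ne'⟩
  have hqL : q ∣ L := ⟨d, by rw [hL, Nat.mul_comm]⟩
  have hL1 : 1 ≤ L := Nat.one_le_iff_ne_zero.2 hL0
  have hLq0 : ((L : ℕ) : ZMod q) = 0 := (ZMod.natCast_eq_zero_iff L q).2 hqL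
  -- step A : cast LHS into ℂ products
  have stepA : ((∑ m ∈ Finset.range q, ‖y ((d * m : ℕ) : ZMod L)‖ ^ 2 : ℝ) : ℂ)
      = ∑ m ∈ Finset.range q, y ((d * m : ℕ) : ZMod L) *
          (starRingEnd ℂ) (y ((d * m : ℕ) : ZMod L)) := by
    push_cast
    apply Finset.sum_congr rfl
    intro m _
    rw [Complex.mul_conj]
    rw [← Complex.sq_norm]
    push_cast
    ring
  -- step B : per-m expansion
  have hconjc : (starRingEnd ℂ) ((Real.sqrt L : ℂ)⁻¹) = (Real.sqrt L : ℂ)⁻¹ := by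
    rw [map_inv₀, Complex.conj_ofReal]
  have stepB : ∀ m : ℕ, y ((d * m : ℕ) : ZMod L) * (starRingEnd ℂ) (y ((d * m : ℕ) : ZMod L))
      = (L : ℂ)⁻¹ * ∑ k : ZMod L, ∑ k' : ZMod L,
          (dft L y k * (starRingEnd ℂ) (dft L y k')) *
            zet L ^ ((d * m) * (ZMod.val k * (L - 1) + ZMod.val k')) := by
    intro m
    set s : ZMod L := ((d * m : ℕ) : ZMod L) with hs
    have h1 := dft_inv L y s
    have h2 : (starRingEnd ℂ) (y s) = (Real.sqrt L : ℂ)⁻¹ *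
        ∑ k' : ZMod L, (starRingEnd ℂ) (dft L y k') * zet L ^ (ZMod.val k' * ZMod.val s) := by
      rw [h1, map_mul, hconjc, map_sum]
      congr 1
      apply Finset.sum_congr rfl; intro k' _
      rw [map_mul, Complex.conj_conj]
    rw [h2, h1]
    have hcc : (Real.sqrt L : ℂ)⁻¹ * (Real.sqrt L : ℂ)⁻¹ = (L : ℂ)⁻¹ := by
      rw [← mul_inv, sqrtL_sq]
    calc ((Real.sqrt L : ℂ)⁻¹ * ∑ k : ZMod L, dft L y k *
            (starRingEnd ℂ) (zet L ^ (ZMod.val k * ZMod.val s))) *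
          ((Real.sqrt L : ℂ)⁻¹ * ∑ k' : ZMod L, (starRingEnd ℂ) (dft L y k') *
            zet L ^ (ZMod.val k' * ZMod.val s))
        = (L : ℂ)⁻¹ * ∑ k : ZMod L, ∑ k' : ZMod L,
            (dft L y k * (starRingEnd ℂ) (zet L ^ (ZMod.val k * ZMod.val s)))
              * ((starRingEnd ℂ) (dft L y k') * zet L ^ (ZMod.val k' * ZMod.val s)) := by
          rw [mul_mul_mul_comm, hcc, Finset.sum_mul_sum]
      _ = (L : ℂ)⁻¹ * ∑ k : ZMod L, ∑ k' : ZMod L,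
            (dft L y k * (starRingEnd ℂ) (dft L y k'))
              * zet L ^ ((d * m) * (ZMod.val k * (L - 1) + ZMod.val k')) := by
          congr 1
          apply Finset.sum_congr rfl; intro k _
          apply Finset.sum_congr rfl; intro k' _
          rw [conj_zet_pow]
          have hz : zet L ^ (ZMod.val k * ZMod.val s * (L - 1)) *
              zet L ^ (ZMod.val k' * ZMod.val s)
              = zet L ^ ((d * m) * (ZMod.val k * (L - 1) + ZMod.val k')) := by
            rw [← pow_add]
            apply zet_pow_modeq
            have hv : ZMod.val s ≡ d * m [MOD L] := by
              rw [hs, ZMod.val_natCast]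
              exact Nat.mod_modEq (d * m) L
            calc ZMod.val k * ZMod.val s * (L - 1) + ZMod.val k' * ZMod.val s
                = ZMod.val s * (ZMod.val k * (L - 1) + ZMod.val k') := by ring
              _ ≡ (d * m) * (ZMod.val k * (L - 1) + ZMod.val k') [MOD L] :=
                  Nat.ModEq.mul_right _ hv
            done
          rw [← hz]; ring
    done
  rw [stepA]
  simp only [stepB]
  rw [← Finset.mul_sum, Finset.sum_comm]
  -- now swap the m-sum inside
  have stepC : ∀ k : ZMod L, ∑ m ∈ Finset.range q, ∑ k' : ZMod L,
      (dft L y k * (starRingEnd ℂ) (dft L y k')) *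
        zet L ^ ((d * m) * (ZMod.val k * (L - 1) + ZMod.val k'))
      = (q : ℂ) * ∑ n ∈ Finset.range d,
          dft L y k * (starRingEnd ℂ) (dft L y (k - ((n * q : ℕ) : ZMod L))) := by
    intro k
    rw [Finset.sum_comm]
    have hinner : ∀ k' : ZMod L,
        ∑ m ∈ Finset.range q, (dft L y k * (starRingEnd ℂ) (dft L y k')) *
          zet L ^ ((d * m) * (ZMod.val k * (L - 1) + ZMod.val k'))
        = (dft L y k * (starRingEnd ℂ) (dft L y k')) *
            (if (((ZMod.val k' : ℕ) : ZMod q) = ((ZMod.val k : ℕ) : ZMod q)) then (q : ℂ) else 0) := by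
      intro k'
      rw [← Finset.mul_sum]
      congr 1
      have hpow : ∀ m : ℕ, zet L ^ ((d * m) * (ZMod.val k * (L - 1) + ZMod.val k'))
          = (zet L ^ (d * (ZMod.val k * (L - 1) + ZMod.val k'))) ^ m := by
        intro m
        rw [← pow_mul]
        congr 1
        ring
      simp only [hpow]
      have hroot : (zet L ^ (d * (ZMod.val k * (L - 1) + ZMod.val k'))) ^ q = 1 := by
        rw [← pow_mul, show d * (ZMod.val k * (L - 1) + ZMod.val k') * q
            = L * (ZMod.val k * (L - 1) + ZMod.val k') by
              rw [show d * (ZMod.val k * (L - 1) + ZMod.val k') * q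
                  = d * q * (ZMod.val k * (L - 1) + ZMod.val k') from by ring, ← hL],
          pow_mul, zet_pow_L, one_pow]
      rw [geo_sum q _ hroot]
      have hcond : (zet L ^ (d * (ZMod.val k * (L - 1) + ZMod.val k')) = 1) ↔
          (((ZMod.val k' : ℕ) : ZMod q) = ((ZMod.val k : ℕ) : ZMod q)) := by
        have hgen : ∀ T : ℕ, (L ∣ d * T) ↔ ((T : ZMod q) = 0) := by
          intro T
          rw [hL, Nat.mul_dvd_mul_iff_left hd, ← ZMod.natCast_eq_zero_iff]
        rw [(zet_prim L).pow_eq_one_iff_dvd, hgen]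
        rw [Nat.cast_add, Nat.cast_mul, Nat.cast_sub hL1, hLq0, Nat.cast_one, zero_sub]
        constructor
        · intro h
          have h2 : ((ZMod.val k' : ℕ) : ZMod q) - ((ZMod.val k : ℕ) : ZMod q) = 0 := by
            linear_combination h
          exact sub_eq_zero.1 h2
        · intro h
          rw [h]
          ring
      by_cases h : ((ZMod.val k' : ℕ) : ZMod q) = ((ZMod.val k : ℕ) : ZMod q)
      · rw [if_pos (hcond.2 h), if_pos h]
      · rw [if_neg (fun hh => h (hcond.1 hh)), if_neg h]
    simp only [hinner]
    have : ∀ k' : ZMod L, (dft L y k * (starRingEnd ℂ) (dft L y k')) *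
        (if (((ZMod.val k' : ℕ) : ZMod q) = ((ZMod.val k : ℕ) : ZMod q)) then (q : ℂ) else 0)
        = (q : ℂ) * (if (((ZMod.val k' : ℕ) : ZMod q) = ((ZMod.val k : ℕ) : ZMod q))
            then dft L y k * (starRingEnd ℂ) (dft L y k') else 0) := by
      intro k'
      by_cases h : ((ZMod.val k' : ℕ) : ZMod q) = ((ZMod.val k : ℕ) : ZMod q)
      · rw [if_pos h, if_pos h]; ring
      · rw [if_neg h, if_neg h]; ring
    simp only [this]
    rw [← Finset.mul_sum, fiber_sum L d q hq0 hL k]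
  simp only [stepC]
  rw [← Finset.mul_sum]
  have hdc : (d : ℂ) ≠ 0 := Nat.cast_ne_zero.2 hd.ne'
  have hLc : (L : ℂ) = (d : ℂ) * (q : ℂ) := by rw [hL]; push_cast; ring
  rw [← mul_assoc, hLc, mul_inv]
  rw [mul_assoc ((d:ℂ)⁻¹), inv_mul_cancel₀ (Nat.cast_ne_zero.2 hq0.ne'), mul_one]

lemma divq_helper (q a b : ℕ) (hq : 0 < q) (hb : b < q) : (q * a + b) / q = a := by
  rw [Nat.mul_add_div hq, Nat.div_eq_of_lt hb, Nat.add_zero]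

lemma val_sub_cast (L : ℕ) [NeZero L] (k : ZMod L) (x : ℕ) (hx : x < L) :
    ZMod.val (k - ((x : ℕ) : ZMod L)) = (ZMod.val k + (L - x)) % L := by
  have h1 : ((L - x : ℕ) : ZMod L) = - ((x : ℕ) : ZMod L) := by
    have h2 : ((L - x : ℕ) : ZMod L) + ((x : ℕ) : ZMod L) = 0 := by
      rw [← Nat.cast_add, Nat.sub_add_cancel hx.le, ZMod.natCast_self]
    exact eq_neg_of_add_eq_zero_left h2
  have h3 : k - ((x : ℕ) : ZMod L) = (((ZMod.val k + (L - x)) : ℕ) : ZMod L) := by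
    rw [Nat.cast_add, h1, val_cast_eq_self, sub_eq_add_neg]
  rw [h3, ZMod.val_natCast]

lemma bands_differ (L d q : ℕ) [NeZero L] (hL : L = d * q) (hq0 : 0 < q) (n : ℕ)
    (hn1 : 1 ≤ n) (hnd : n < d) (k : ZMod L) :
    ZMod.val (k - ((n * q : ℕ) : ZMod L)) / q ≠ ZMod.val k / q := by
  have hnqL : n * q < L := by
    rw [hL]; exact Nat.mul_lt_mul_of_lt_of_le hnd (le_refl q) hq0
  have hvL : ZMod.val k < L := ZMod.val_lt k
  have hval := val_sub_cast L k (n * q) hnqL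
  have hjr : q * (ZMod.val k / q) + ZMod.val k % q = ZMod.val k := Nat.div_add_mod _ q
  have hrq : ZMod.val k % q < q := Nat.mod_lt _ hq0
  have hjd : ZMod.val k / q < d := by
    rw [Nat.div_lt_iff_lt_mul hq0, Nat.mul_comm d q] at *
    omega
  set v := ZMod.val k
  set j := v / q
  set r := v % q
  by_cases hcase : n ≤ j
  · -- value is v - n*q, band j - n
    have hnv : n * q ≤ v := by
      have h := Nat.mul_le_mul_right q hcase
      rw [Nat.mul_comm j q] at h
      omega
    have hmod : (v + (L - n * q)) % L = v - n * q := by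
      have h1 : v + (L - n * q) = (v - n * q) + L := by omega
      rw [h1, Nat.add_mod_right, Nat.mod_eq_of_lt (by omega)]
    have hsplit : v - n * q = q * (j - n) + r := by
      have h3 : q * (j - n) = q * j - q * n := by rw [Nat.mul_sub]
      have h4 : q * n = n * q := Nat.mul_comm q n
      have h6 : q * n ≤ q * j := Nat.mul_le_mul_left q hcase
      omega
    rw [hval, hmod, hsplit, divq_helper q (j - n) r hq0 hrq]
    omega
  · -- value is v + L - n*q, band j + d - n
    have hmod : (v + (L - n * q)) % L = q * (j + d - n) + r := by
      have hvnq : v < n * q := by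
        have h := Nat.mul_le_mul_right q (show j + 1 ≤ n by omega)
        rw [Nat.add_mul, Nat.one_mul, Nat.mul_comm j q] at h
        omega
      have h1 : q * (j + d - n) = q * j + q * d - q * n := by
        rw [← Nat.mul_add, ← Nat.mul_sub]
      have h2 : v + (L - n * q) = q * (j + d - n) + r := by
        have h4 : q * n = n * q := Nat.mul_comm q n
        have h5 : q * d = L := by rw [hL, Nat.mul_comm]
        omega
      rw [h2]
      apply Nat.mod_eq_of_lt
      have h6 : j + d - n ≤ d - 1 := by omega
      have h7 : q * (j + d - n) ≤ q * (d - 1) := Nat.mul_le_mul_left q h6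
      have h8 : q * (d - 1) = q * d - q := by rw [Nat.mul_sub, Nat.mul_one]
      have h5 : q * d = L := by rw [hL, Nat.mul_comm]
      omega
    rw [hval, hmod, divq_helper q (j + d - n) r hq0 hrq]
    omega

lemma mul_conj_abs (z : ℂ) : z * (starRingEnd ℂ) z = ((‖z‖ ^ 2 : ℝ) : ℂ) := by
  rw [Complex.mul_conj, ← Complex.sq_norm]

lemma band_eq (L d q : ℕ) (hd : 0 < d) (hL : L = d * q) (v : ℕ) :
    v * d / L = v / q := by
  rw [hL, Nat.mul_comm v d, Nat.mul_div_mul_left v q hd]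

lemma sum_range_cast (L : ℕ) [NeZero L] (f : ZMod L → ℝ) :
    ∑ i ∈ Finset.range L, f ((i : ℕ) : ZMod L) = ∑ ℓ : ZMod L, f ℓ := by
  apply Finset.sum_nbij' (fun i => ((i : ℕ) : ZMod L)) (fun ℓ => ZMod.val ℓ)
  · intro a _; exact Finset.mem_univ _
  · intro a _; exact Finset.mem_range.2 (ZMod.val_lt a)
  · intro i hi; exact ZMod.val_cast_of_lt (Finset.mem_range.1 hi)
  · intro a _; exact val_cast_eq_self L a
  · intro a _; rfl

lemma parseval (L : ℕ) [NeZero L] (x : ZMod L → ℂ) :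
    ∑ k : ZMod L, ‖dft L x k‖ ^ 2 = ∑ n : ZMod L, ‖x n‖ ^ 2 := by
  have h := sampled L 1 one_pos (one_dvd L) x
  simp only [Nat.div_one, Finset.sum_range_one, Nat.zero_mul, Nat.cast_zero, sub_zero,
    Nat.cast_one, inv_one, one_mul, Nat.one_mul] at h
  have h2 : ∑ m ∈ Finset.range L, ‖x ((m : ℕ) : ZMod L)‖ ^ 2
      = ∑ n : ZMod L, ‖x n‖ ^ 2 :=
    sum_range_cast L (fun n => ‖x n‖ ^ 2)
  rw [h2] at h
  have h3 : ∀ k : ZMod L, dft L x k * (starRingEnd ℂ) (dft L x k)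
      = ((‖dft L x k‖ ^ 2 : ℝ) : ℂ) := fun k => mul_conj_abs _
  simp only [h3] at h
  exact_mod_cast h.symm

noncomputable def chi (L : ℕ) [NeZero L] (k₀ : ZMod L) : ZMod L → ℂ :=
  fun n => (starRingEnd ℂ) (zet L ^ (ZMod.val k₀ * ZMod.val n))

lemma dft_chi (L : ℕ) [NeZero L] (k₀ k : ZMod L) :
    dft L (chi L k₀) k = if k = k₀ then (Real.sqrt L : ℂ) else 0 := by
  have hL1 : 1 ≤ L := Nat.one_le_iff_ne_zero.2 (NeZero.ne L)
  rw [dft_eq]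
  have hterm : ∀ ℓ : ZMod L, chi L k₀ ℓ * zet L ^ (ZMod.val k * ZMod.val ℓ)
      = zet L ^ ((ZMod.val k₀ * (L - 1) + ZMod.val k) * ZMod.val ℓ) := by
    intro ℓ
    rw [chi, conj_zet_pow, ← pow_add]
    congr 1
    ring
  simp only [hterm]
  rw [char_sum]
  have hcond : (((ZMod.val k₀ * (L - 1) + ZMod.val k : ℕ) : ZMod L) = 0) ↔ k = k₀ := by
    rw [Nat.cast_add, Nat.cast_mul, Nat.cast_sub hL1, ZMod.natCast_self, Nat.cast_one,
      zero_sub, val_cast_eq_self, val_cast_eq_self]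
    constructor
    · intro h
      have h2 : k - k₀ = 0 := by linear_combination h
      have := sub_eq_zero.1 h2
      exact this
    · intro h
      rw [h]
      ring
  by_cases h : k = k₀
  · rw [if_pos ((hcond).2 h), if_pos h]
    have hs := sqrtL_ne L
    field_simp
    rw [sq]; exact (sqrtL_sq L).symm
  · rw [if_neg (fun hh => h (hcond.1 hh)), if_neg h, mul_zero]

lemma abs_dft_chi_sq (L : ℕ) [NeZero L] (k₀ k : ZMod L) :
    ‖dft L (chi L k₀) k‖ ^ 2 = if k = k₀ then (L : ℝ) else 0 := by
  rw [dft_chi]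
  by_cases h : k = k₀
  · rw [if_pos h, if_pos h]
    rw [Complex.norm_real, Real.norm_eq_abs, _root_.abs_of_nonneg (Real.sqrt_nonneg _),
      Real.sq_sqrt (Nat.cast_nonneg L)]
  · rw [if_neg h, if_neg h]
    simp

lemma sum_abs_chi_sq (L : ℕ) [NeZero L] (k₀ : ZMod L) :
    ∑ n : ZMod L, ‖chi L k₀ n‖ ^ 2 = (L : ℝ) := by
  have habs : ∀ n : ZMod L, ‖chi L k₀ n‖ = 1 := by
    intro n
    rw [chi, Complex.norm_conj, norm_pow, abs_zet, one_pow]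
  simp only [habs, one_pow]
  rw [Finset.sum_const, Finset.card_univ, ZMod.card, nsmul_eq_mul, mul_one]

lemma energy (L d : ℕ) [NeZero L] (hd : 0 < d) (hdL : d ∣ L)
    (ψ w : ℕ → ZMod L → ℂ)
    (hψ : ∀ j < d, ∀ k : ZMod L,
      dft L (ψ j) k = if ZMod.val k / (L / d) = j then 1 else 0)
    (x : ZMod L → ℂ) :
    (∑ j ∈ Finset.range d, ∑ m ∈ Finset.range (L / d),
        ‖conv L x (conv L (ψ j) (w j)) ((d * m : ℕ) : ZMod L)‖ ^ 2)
    = (L : ℝ) ^ 2 / d * ∑ k : ZMod L,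
        ‖dft L (w (ZMod.val k * d / L)) k‖ ^ 2 *
          ‖dft L x k‖ ^ 2 := by
  set q := L / d with hqdef
  have hL : L = d * q := (Nat.mul_div_cancel' hdL).symm
  have hq0 : 0 < q := by
    rcases Nat.eq_zero_or_pos q with h | h
    · exact absurd (by rw [hL, h, Nat.mul_zero]) (NeZero.ne L)
    · exact h
  -- convolution theorem applied twice
  have hyj : ∀ j : ℕ, ∀ k : ZMod L, dft L (conv L x (conv L (ψ j) (w j))) k
      = (L : ℂ) * (dft L x k * (dft L (ψ j) k * dft L (w j) k)) := by
    intro j k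
    rw [dft_conv, dft_conv]
    linear_combination (dft L x k * (dft L (ψ j) k * dft L (w j) k)) * sqrtL_sq L
  -- the per-j inner double sum
  have hj : ∀ j : ℕ, j < d → ∑ k : ZMod L, ∑ n ∈ Finset.range d,
      dft L (conv L x (conv L (ψ j) (w j))) k *
        (starRingEnd ℂ) (dft L (conv L x (conv L (ψ j) (w j))) (k - ((n * q : ℕ) : ZMod L)))
      = ∑ k : ZMod L, (if ZMod.val k / q = j then
          (L : ℂ) ^ 2 * ((‖dft L (w j) k‖ ^ 2 : ℝ) : ℂ) *
            ((‖dft L x k‖ ^ 2 : ℝ) : ℂ) else 0) := by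
    intro j hjd
    apply Finset.sum_congr rfl
    intro k _
    rw [Finset.sum_eq_single_of_mem 0 (Finset.mem_range.2 hd)]
    · -- the n = 0 term
      have h0 : ((0 * q : ℕ) : ZMod L) = 0 := by norm_num
      rw [h0, sub_zero, hyj, hψ j hjd k]
      by_cases hb : ZMod.val k / q = j
      · rw [if_pos hb, if_pos hb]
        have hexp : (L : ℂ) * (dft L x k * ((1 : ℂ) * dft L (w j) k)) *
            (starRingEnd ℂ) ((L : ℂ) * (dft L x k * ((1 : ℂ) * dft L (w j) k)))
            = (L : ℂ) ^ 2 * (dft L (w j) k * (starRingEnd ℂ) (dft L (w j) k)) *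
              (dft L x k * (starRingEnd ℂ) (dft L x k)) := by
          rw [map_mul, map_mul, map_mul, map_one, map_natCast]
          ring
        rw [hexp, mul_conj_abs, mul_conj_abs]
      · rw [if_neg hb, if_neg hb]
        simp
    · -- nonzero aliasing terms vanish
      intro n hn hne
      have h1 : 1 ≤ n := Nat.one_le_iff_ne_zero.2 hne
      have hbdiff := bands_differ L d q hL hq0 n h1 (Finset.mem_range.1 hn) k
      rw [hyj, hyj, hψ j hjd k, hψ j hjd (k - ((n * q : ℕ) : ZMod L))]
      by_cases hb : ZMod.val k / q = j
      · have hb2 : ¬ (ZMod.val (k - ((n * q : ℕ) : ZMod L)) / q = j) := by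
          rw [hb] at hbdiff
          exact hbdiff
        rw [if_neg hb2]
        simp
      · rw [if_neg hb]
        simp
  -- cast everything to ℂ
  rw [← Complex.ofReal_inj]
  have hcast : ((∑ j ∈ Finset.range d, ∑ m ∈ Finset.range q,
      ‖conv L x (conv L (ψ j) (w j)) ((d * m : ℕ) : ZMod L)‖ ^ 2 : ℝ) : ℂ)
      = ∑ j ∈ Finset.range d, ((∑ m ∈ Finset.range q,
          ‖conv L x (conv L (ψ j) (w j)) ((d * m : ℕ) : ZMod L)‖ ^ 2 : ℝ) : ℂ) := by
    push_cast
    rfl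
  rw [hcast]
  have hsampled : ∀ j ∈ Finset.range d, ((∑ m ∈ Finset.range q,
      ‖conv L x (conv L (ψ j) (w j)) ((d * m : ℕ) : ZMod L)‖ ^ 2 : ℝ) : ℂ)
      = (d : ℂ)⁻¹ * ∑ k : ZMod L, (if ZMod.val k / q = j then
          (L : ℂ) ^ 2 * ((‖dft L (w j) k‖ ^ 2 : ℝ) : ℂ) *
            ((‖dft L x k‖ ^ 2 : ℝ) : ℂ) else 0) := by
    intro j hjm
    rw [sampled L d hd hdL (conv L x (conv L (ψ j) (w j))), hj j (Finset.mem_range.1 hjm)]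
  rw [Finset.sum_congr rfl hsampled, ← Finset.mul_sum, Finset.sum_comm]
  have hswap : ∀ k : ZMod L, ∑ j ∈ Finset.range d, (if ZMod.val k / q = j then
      (L : ℂ) ^ 2 * ((‖dft L (w j) k‖ ^ 2 : ℝ) : ℂ) *
        ((‖dft L x k‖ ^ 2 : ℝ) : ℂ) else 0)
      = (L : ℂ) ^ 2 * ((‖dft L (w (ZMod.val k * d / L)) k‖ ^ 2 : ℝ) : ℂ) *
          ((‖dft L x k‖ ^ 2 : ℝ) : ℂ) := by
    intro k
    have hkd : ZMod.val k / q ∈ Finset.range d := by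
      refine Finset.mem_range.2 ?_
      rw [Nat.div_lt_iff_lt_mul hq0, Nat.mul_comm d q] at *
      have := ZMod.val_lt k
      omega
    rw [Finset.sum_ite_eq (Finset.range d) (ZMod.val k / q), if_pos hkd,
      band_eq L d q hd hL (ZMod.val k)]
  rw [Finset.sum_congr rfl (fun k _ => hswap k)]
  have hdne : (d : ℝ) ≠ 0 := Nat.cast_ne_zero.2 hd.ne'
  push_cast
  rw [Finset.mul_sum, Finset.mul_sum]
  apply Finset.sum_congr rfl
  intro k _
  field_simp
/-- painless hybrid filterbank: if `ψ̂_j` is the indicator of the `j`-th band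
of width `L/d` (for `j = 0,…,d−1`, `M = d`), then the hybrid filterbank `{(ψ_j ∗ w_j), ↓_d}`
has aliasing terms `G_n ≡ 0` for `n ≥ 1` and `G_0[k] = d⁻¹|ŵ_{⌊kd/L⌋}[k]|²`; it is a g-frame
iff all `ŵ_{⌊kd/L⌋}[k] ≠ 0`, and a tight g-frame iff `|ŵ_{⌊kd/L⌋}[k]|` is a nonzero constant. -/
theorem stmt14 (L d : ℕ) [NeZero L] (hd : 0 < d) (hdL : d ∣ L)
    (ψ w : ℕ → ZMod L → ℂ)
    (hψ : ∀ j < d, ∀ k : ZMod L,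
      dft L (ψ j) k = if ZMod.val k / (L / d) = j then 1 else 0)
    (G : ℕ → ZMod L → ℂ)
    (hG : ∀ n k, G n k = (d : ℂ)⁻¹ * ∑ j ∈ Finset.range d,
      (dft L (ψ j) k * dft L (w j) k) *
        (starRingEnd ℂ) (dft L (ψ j) (k - ((n * (L / d) : ℕ) : ZMod L)) *
          dft L (w j) (k - ((n * (L / d) : ℕ) : ZMod L)))) :
    (∀ n, 1 ≤ n → n < d → ∀ k : ZMod L, G n k = 0) ∧
    (∀ k : ZMod L, G 0 k =
      (d : ℂ)⁻¹ * (‖dft L (w (ZMod.val k * d / L)) k‖ : ℂ) ^ 2) ∧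
    ((∃ A B : ℝ, 0 < A ∧ ∀ x : ZMod L → ℂ,
        A * ∑ k : ZMod L, ‖x k‖ ^ 2 ≤
            (∑ j ∈ Finset.range d, ∑ m ∈ Finset.range (L / d),
              ‖conv L x (conv L (ψ j) (w j)) ((d * m : ℕ) : ZMod L)‖ ^ 2) ∧
          (∑ j ∈ Finset.range d, ∑ m ∈ Finset.range (L / d),
              ‖conv L x (conv L (ψ j) (w j)) ((d * m : ℕ) : ZMod L)‖ ^ 2) ≤
            B * ∑ k : ZMod L, ‖x k‖ ^ 2) ↔
      (∀ k : ZMod L, 0 < ‖dft L (w (ZMod.val k * d / L)) k‖)) ∧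
    ((∃ A : ℝ, 0 < A ∧ ∀ x : ZMod L → ℂ,
        (∑ j ∈ Finset.range d, ∑ m ∈ Finset.range (L / d),
            ‖conv L x (conv L (ψ j) (w j)) ((d * m : ℕ) : ZMod L)‖ ^ 2) =
          A * ∑ k : ZMod L, ‖x k‖ ^ 2) ↔
      (∃ c : ℝ, 0 < c ∧ ∀ k : ZMod L,
        ‖dft L (w (ZMod.val k * d / L)) k‖ = c)) := by
  have hL : L = d * (L / d) := (Nat.mul_div_cancel' hdL).symm
  have hq0 : 0 < L / d := by
    rcases Nat.eq_zero_or_pos (L / d) with h | h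
    · exact absurd (by rw [hL, h, Nat.mul_zero]) (NeZero.ne L)
    · exact h
  have hband : ∀ k : ZMod L, ZMod.val k / (L / d) < d := by
    intro k
    rw [Nat.div_lt_iff_lt_mul hq0, Nat.mul_comm d (L / d)] at *
    have := ZMod.val_lt k
    omega
  have hE := energy L d hd hdL ψ w hψ
  have hLposR : (0 : ℝ) < L := Nat.cast_pos.2 (Nat.pos_of_ne_zero (NeZero.ne L))
  have hdposR : (0 : ℝ) < d := Nat.cast_pos.2 hd
  -- the weighted delta sums
  have hsumdelta : ∀ k₀ : ZMod L, ∑ k : ZMod L,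
      ‖dft L (w (ZMod.val k * d / L)) k‖ ^ 2 *
        ‖dft L (chi L k₀) k‖ ^ 2
      = ‖dft L (w (ZMod.val k₀ * d / L)) k₀‖ ^ 2 * (L : ℝ) := by
    intro k₀
    have hterm : ∀ k : ZMod L,
        ‖dft L (w (ZMod.val k * d / L)) k‖ ^ 2 *
          ‖dft L (chi L k₀) k‖ ^ 2
        = if k = k₀ then
            ‖dft L (w (ZMod.val k * d / L)) k‖ ^ 2 * (L : ℝ) else 0 := by
      intro k
      rw [abs_dft_chi_sq]
      by_cases h : k = k₀
      · rw [if_pos h, if_pos h]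
      · rw [if_neg h, if_neg h, mul_zero]
    rw [Finset.sum_congr rfl (fun k _ => hterm k),
      Finset.sum_ite_eq' Finset.univ k₀
        (fun k => ‖dft L (w (ZMod.val k * d / L)) k‖ ^ 2 * (L : ℝ)),
      if_pos (Finset.mem_univ k₀)]
  refine ⟨?_, ?_, ?_, ?_⟩
  · -- Part 1 : aliasing terms vanish
    intro n h1 hnd k
    rw [hG]
    have hz : ∑ j ∈ Finset.range d,
        (dft L (ψ j) k * dft L (w j) k) *
          (starRingEnd ℂ) (dft L (ψ j) (k - ((n * (L / d) : ℕ) : ZMod L)) *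
            dft L (w j) (k - ((n * (L / d) : ℕ) : ZMod L))) = 0 := by
      apply Finset.sum_eq_zero
      intro j hj
      have hjd := Finset.mem_range.1 hj
      have hbdiff := bands_differ L d (L / d) hL hq0 n h1 hnd k
      rw [hψ j hjd k, hψ j hjd (k - ((n * (L / d) : ℕ) : ZMod L))]
      by_cases hb : ZMod.val k / (L / d) = j
      · have hb2 : ¬ ZMod.val (k - ((n * (L / d) : ℕ) : ZMod L)) / (L / d) = j := by
          intro hcontra
          exact hbdiff (hcontra.trans hb.symm)
        rw [if_neg hb2]
        simp
      · rw [if_neg hb]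
        simp
    rw [hz, mul_zero]
  · -- Part 2 : G₀
    intro k
    rw [hG]
    have h0 : ((0 * (L / d) : ℕ) : ZMod L) = 0 := by norm_num
    simp only [h0, sub_zero]
    rw [Finset.sum_eq_single_of_mem (ZMod.val k / (L / d))
      (Finset.mem_range.2 (hband k))]
    · rw [hψ (ZMod.val k / (L / d)) (hband k) k, if_pos rfl, one_mul, mul_conj_abs,
        band_eq L d (L / d) hd hL (ZMod.val k)]
      norm_cast
    · intro j hj hne
      rw [hψ j (Finset.mem_range.1 hj) k, if_neg (fun h => hne h.symm)]
      simp
  · -- Part 3 : frame iff nonvanishing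
    constructor
    · rintro ⟨A, B, hA, hx⟩ k₀
      rcases lt_or_ge 0 (‖dft L (w (ZMod.val k₀ * d / L)) k₀‖) with h | h
      · exact h
      exfalso
      have h0 : ‖dft L (w (ZMod.val k₀ * d / L)) k₀‖ = 0 :=
        le_antisymm h (norm_nonneg _)
      obtain ⟨hlow, -⟩ := hx (chi L k₀)
      rw [hE (chi L k₀), sum_abs_chi_sq, hsumdelta k₀, h0] at hlow
      have hz : (L : ℝ) ^ 2 / d * ((0 : ℝ) ^ 2 * L) = 0 := by ring
      rw [hz] at hlow
      nlinarith
    · intro hpos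
      have hPpos : ∀ k : ZMod L,
          0 < ‖dft L (w (ZMod.val k * d / L)) k‖ ^ 2 :=
        fun k => pow_pos (hpos k) 2
      have hne : (Finset.univ : Finset (ZMod L)).Nonempty := Finset.univ_nonempty
      set P : ZMod L → ℝ :=
        fun k => ‖dft L (w (ZMod.val k * d / L)) k‖ ^ 2 with hP
      refine ⟨(L : ℝ) ^ 2 / d * Finset.univ.inf' hne P,
        (L : ℝ) ^ 2 / d * Finset.univ.sup' hne P, ?_, ?_⟩
      · have : 0 < Finset.univ.inf' hne P :=
          (Finset.lt_inf'_iff hne).2 (fun k _ => hPpos k)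
        positivity
      · intro x
        rw [hE x, ← parseval L x]
        constructor
        · calc (L : ℝ) ^ 2 / d * Finset.univ.inf' hne P *
              ∑ k : ZMod L, ‖dft L x k‖ ^ 2
              = (L : ℝ) ^ 2 / d *
                ∑ k : ZMod L, Finset.univ.inf' hne P * ‖dft L x k‖ ^ 2 := by
                rw [Finset.mul_sum, Finset.mul_sum]
                apply Finset.sum_congr rfl
                intro k _
                ring
            _ ≤ (L : ℝ) ^ 2 / d * ∑ k : ZMod L,
                P k * ‖dft L x k‖ ^ 2 := by
                apply mul_le_mul_of_nonneg_left _ (by positivity)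
                apply Finset.sum_le_sum
                intro k _
                exact mul_le_mul_of_nonneg_right (Finset.inf'_le P (Finset.mem_univ k))
                  (by positivity)
        · calc (L : ℝ) ^ 2 / d * ∑ k : ZMod L,
              P k * ‖dft L x k‖ ^ 2
              ≤ (L : ℝ) ^ 2 / d * ∑ k : ZMod L,
                Finset.univ.sup' hne P * ‖dft L x k‖ ^ 2 := by
                apply mul_le_mul_of_nonneg_left _ (by positivity)
                apply Finset.sum_le_sum
                intro k _
                exact mul_le_mul_of_nonneg_right (Finset.le_sup' P (Finset.mem_univ k))
                  (by positivity)
            _ = (L : ℝ) ^ 2 / d * Finset.univ.sup' hne P *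
                ∑ k : ZMod L, ‖dft L x k‖ ^ 2 := by
                rw [Finset.mul_sum, Finset.mul_sum]
                apply Finset.sum_congr rfl
                intro k _
                ring
  · -- Part 4 : tight iff constant
    constructor
    · rintro ⟨A, hA, hx⟩
      have hPk : ∀ k₀ : ZMod L,
          ‖dft L (w (ZMod.val k₀ * d / L)) k₀‖ ^ 2 = A * d / (L : ℝ) ^ 2 := by
        intro k₀
        have h := hx (chi L k₀)
        rw [hE (chi L k₀), sum_abs_chi_sq, hsumdelta k₀] at h
        have hLne : (L : ℝ) ≠ 0 := hLposR.ne'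
        have hdne : (d : ℝ) ≠ 0 := hdposR.ne'
        field_simp at h ⊢
        nlinarith [h]
      refine ⟨Real.sqrt (A * d / (L : ℝ) ^ 2), ?_, ?_⟩
      · apply Real.sqrt_pos.2
        positivity
      · intro k
        rw [← hPk k]
        rw [Real.sqrt_sq (norm_nonneg _)]
    · rintro ⟨c, hc, hck⟩
      refine ⟨(L : ℝ) ^ 2 / d * c ^ 2, by positivity, ?_⟩
      intro x
      rw [hE x, ← parseval L x]
      have hterm : ∀ k : ZMod L,
          ‖dft L (w (ZMod.val k * d / L)) k‖ ^ 2 *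
            ‖dft L x k‖ ^ 2
          = c ^ 2 * ‖dft L x k‖ ^ 2 := by
        intro k
        rw [hck k]
      rw [Finset.sum_congr rfl (fun k _ => hterm k), ← Finset.mul_sum]
      ring
end

section
/- (Expected aliasing at random initialization) If the kernels w_j[0],…,w_j[L_K−1] are i.i.d. real random variables with mean 0 and variance σ², independent across j, and w_j[n] = 0 for n ≥ L_K, then for every k, E[G_n[k]] = (σ²M/(Ld)) · Σ_{ℓ=0}^{L_K−1} e^{−2πiℓn/d}. In particular, if d | L_K then E[G_0[k]] = σ²ML_K/(Ld) and E[G_n[k]] = 0 for 1 ≤ n ≤ d−1. -/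
open scoped BigOperators
open MeasureTheory ProbabilityTheory

noncomputable def aliasTerm (L d M : ℕ) [NeZero L] (w : Fin M → ZMod L → ℂ) (n : ℕ)
    (k : ZMod L) : ℂ :=
  (d : ℂ)⁻¹ * ∑ j : Fin M, dft L (w j) k *
    (starRingEnd ℂ) (dft L (w j) (k - ((n * (L / d) : ℕ) : ZMod L)))

/-- Sum over `ZMod L` of a function of the value equals a sum over `range L`. -/
theorem sumZMod_aux (L : ℕ) [NeZero L] (g : ℕ → ℂ) :
    ∑ ℓ : ZMod L, g ℓ.val = ∑ m ∈ Finset.range L, g m := by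
  refine Finset.sum_nbij' (fun ℓ => ℓ.val) (fun m => (m : ZMod L)) ?_ ?_ ?_ ?_ ?_
  · intro a _; exact Finset.mem_range.2 (ZMod.val_lt a)
  · intro a _; exact Finset.mem_univ _
  · intro a _; simp [ZMod.natCast_val]
  · intro a ha; exact ZMod.val_cast_of_lt (Finset.mem_range.1 ha)
  · intro a _; rfl

/-- Expansion of a product of two windowed sums into a double sum. -/
theorem expand_aux (dd : ℕ) {L : ℕ} [NeZero L] (s : ℝ) (f e1 e2 : ZMod L → ℂ)
    (hf : ∀ ℓ, (starRingEnd ℂ) (f ℓ) = f ℓ) :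
    (dd:ℂ)⁻¹ * ((↑s * ∑ ℓ : ZMod L, f ℓ * e1 ℓ) *
      (starRingEnd ℂ) (↑s * ∑ ℓ : ZMod L, f ℓ * e2 ℓ))
    = ∑ ℓ : ZMod L, ∑ ℓ' : ZMod L,
        ((dd:ℂ)⁻¹ * ((s:ℂ) * (s:ℂ)) * (e1 ℓ * (starRingEnd ℂ) (e2 ℓ'))) * (f ℓ * f ℓ') := by
  rw [map_mul, Complex.conj_ofReal, map_sum]
  have h2 : ∀ ℓ' : ZMod L, (starRingEnd ℂ) (f ℓ' * e2 ℓ') = f ℓ' * (starRingEnd ℂ) (e2 ℓ') :=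
    fun ℓ' => by rw [map_mul, hf]
  simp_rw [h2, Finset.mul_sum, Finset.sum_mul, Finset.mul_sum]
  rw [Finset.sum_comm]
  refine Finset.sum_congr rfl fun ℓ _ => ?_
  refine Finset.sum_congr rfl fun ℓ' _ => ?_
  ring

/-- Phase computation: the product of a DFT phase and a conjugated shifted phase. -/
theorem phase_aux (L d e n t : ℕ) (a b l : ℕ) (q : ℤ)
    (hL : L = d * e) (ht : t = n * e) (hd : (d:ℂ) ≠ 0) (he : (e:ℂ) ≠ 0)
    (hq : (a : ℤ) - (b : ℤ) - t = L * q) :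
    Complex.exp (-(2 * Real.pi * Complex.I * a * l) / L) *
      (starRingEnd ℂ) (Complex.exp (-(2 * Real.pi * Complex.I * b * l) / L)) =
    Complex.exp (-(2 * Real.pi * Complex.I * l * n) / d) := by
  rw [← Complex.exp_conj]
  have hc : (starRingEnd ℂ) (-(2 * Real.pi * Complex.I * b * l) / L)
      = (2 * Real.pi * Complex.I * b * l) / L := by
    simp [map_div₀, map_ofNat, Complex.conj_I]
  rw [hc, ← Complex.exp_add]
  have hq' : (a : ℂ) = (b : ℂ) + (t : ℂ) + (L : ℂ) * q := by
    have h2 : (a : ℤ) = (b : ℤ) + t + L * q := by linarith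
    exact_mod_cast congrArg (Int.cast : ℤ → ℂ) h2
  have hLc : (L : ℂ) = (d : ℂ) * e := by exact_mod_cast congrArg (Nat.cast : ℕ → ℂ) hL
  have htc : (t : ℂ) = (n : ℂ) * e := by exact_mod_cast congrArg (Nat.cast : ℕ → ℂ) ht
  have hX : -(2 * (Real.pi:ℂ) * Complex.I * a * l) / L
        + (2 * (Real.pi:ℂ) * Complex.I * b * l) / L
      = -(2 * (Real.pi:ℂ) * Complex.I * l * n) / d
        + ((-(l * q) : ℤ) * (2 * (Real.pi:ℂ) * Complex.I)) := by
    rw [hq', hLc, htc]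
    have hL0 : (d : ℂ) * e ≠ 0 := mul_ne_zero hd he
    field_simp
    push_cast
    ring
  rw [hX, Complex.exp_add, Complex.exp_int_mul_two_pi_mul_I, mul_one]

/-- expected aliasing at random initialization: for kernels with i.i.d.
entries of mean `0` and variance `σ²` (zero beyond the kernel), for every `k`,
`E[G_n[k]] = (σ²M/(Ld))·Σ_{ℓ=0}^{L_K−1} e^{−2πiℓn/d}`; in particular if `d ∣ L_K`, then
`E[G_0[k]] = σ²ML_K/(Ld)` and `E[G_n[k]] = 0` for `1 ≤ n ≤ d−1`. -/
theorem stmt15 {Ω : Type*} [MeasurableSpace Ω] (μ : Measure Ω) [IsProbabilityMeasure μ]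
    (L d M LK : ℕ) [NeZero L] (hd : 0 < d) (hdL : d ∣ L) (hLK : 0 < LK) (hLKL : LK ≤ L)
    (σ : ℝ) (hσ : 0 < σ)
    (W : Fin M × Fin LK → Ω → ℝ)
    (hmeas : ∀ p, Measurable (W p))
    (hindep : iIndepFun W μ)
    (hL2 : ∀ p, MemLp (W p) 2 μ)
    (hmean : ∀ p, ∫ ω, W p ω ∂μ = 0)
    (hvar : ∀ p, ∫ ω, (W p ω) ^ 2 ∂μ = σ ^ 2)
    (w : Ω → Fin M → ZMod L → ℂ)
    (hw : ∀ ω j (n : ZMod L),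
      w ω j n = if h : ZMod.val n < LK then (W (j, ⟨ZMod.val n, h⟩) ω : ℂ) else 0)
    (n : ℕ) (hn : n < d) (k : ZMod L) :
    (∫ ω, aliasTerm L d M (w ω) n k ∂μ =
      ((σ ^ 2 * M / (L * d) : ℝ) : ℂ) * ∑ ℓ ∈ Finset.range LK,
        Complex.exp (-(2 * Real.pi * Complex.I * ℓ * n) / (d : ℂ))) ∧
    (d ∣ LK →
      (n = 0 → ∫ ω, aliasTerm L d M (w ω) n k ∂μ = ((σ ^ 2 * M * LK / (L * d) : ℝ) : ℂ)) ∧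
      (1 ≤ n → ∫ ω, aliasTerm L d M (w ω) n k ∂μ = 0)) := by
  have hL0 : 0 < L := Nat.pos_of_ne_zero (NeZero.ne L)
  set t : ℕ := n * (L / d) with ht
  set k' : ZMod L := k - (t : ZMod L) with hk'
  set c : ZMod L → ZMod L → ℂ := fun a ℓ =>
    Complex.exp (-(2 * Real.pi * Complex.I * (a.val : ℂ) * (ℓ.val : ℂ)) / (L : ℂ)) with hc
  set s : ℝ := (Real.sqrt L)⁻¹ with hs
  -- real pair expectations
  have hWint : ∀ p, Integrable (W p) μ := fun p => (hL2 p).integrable one_le_two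
  have hIntPair : ∀ p q, Integrable (fun ω => W p ω * W q ω) μ := by
    intro p q
    have : MemLp (W p • W q) 1 μ :=
      (hL2 q).smul (hL2 p) (hpqr := ⟨by simp [one_div, ENNReal.inv_two_add_inv_two]⟩)
    exact memLp_one_iff_integrable.mp this
  have hpair : ∀ p q, ∫ ω, W p ω * W q ω ∂μ = if p = q then σ ^ 2 else 0 := by
    intro p q
    by_cases hpq : p = q
    · subst hpq
      rw [if_pos rfl, ← hvar p]
      simp [pow_two]
    · rw [if_neg hpq,
        show (∫ ω, W p ω * W q ω ∂μ) = ∫ ω, (W p * W q) ω ∂μ from rfl,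
        (hindep.indepFun hpq).integral_mul_eq_mul_integral (hWint p).1 (hWint q).1,
        hmean p, hmean q, mul_zero]
  -- conjugation of w entries
  have hwre : ∀ ω j ℓ, (starRingEnd ℂ) (w ω j ℓ) = w ω j ℓ := by
    intro ω j ℓ
    rw [hw]
    split
    · exact Complex.conj_ofReal _
    · exact map_zero _
  -- integrability of complex products
  have hintw : ∀ (j : Fin M) (ℓ ℓ' : ZMod L),
      Integrable (fun ω => w ω j ℓ * w ω j ℓ') μ := by
    intro j ℓ ℓ'
    by_cases h1 : ℓ.val < LK
    · by_cases h2 : ℓ'.val < LK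
      · have he : (fun ω => w ω j ℓ * w ω j ℓ')
            = fun ω => ((W (j, ⟨ℓ.val, h1⟩) ω * W (j, ⟨ℓ'.val, h2⟩) ω : ℝ) : ℂ) := by
          funext ω; rw [hw, hw, dif_pos h1, dif_pos h2]; push_cast; ring
        rw [he]
        exact (hIntPair _ _).ofReal
      · have he : (fun ω => w ω j ℓ * w ω j ℓ') = fun _ => (0 : ℂ) := by
          funext ω; rw [hw ω j ℓ', dif_neg h2, mul_zero]
        rw [he]; exact integrable_zero _ _ _
    · have he : (fun ω => w ω j ℓ * w ω j ℓ') = fun _ => (0 : ℂ) := by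
        funext ω; rw [hw ω j ℓ, dif_neg h1, zero_mul]
      rw [he]; exact integrable_zero _ _ _
  -- complex pair expectations
  have hkey : ∀ (j : Fin M) (ℓ ℓ' : ZMod L),
      ∫ ω, w ω j ℓ * w ω j ℓ' ∂μ
        = if ℓ = ℓ' ∧ ℓ.val < LK then ((σ ^ 2 : ℝ) : ℂ) else 0 := by
    intro j ℓ ℓ'
    by_cases h1 : ℓ.val < LK
    · by_cases h2 : ℓ'.val < LK
      · have he : ∀ ω, w ω j ℓ * w ω j ℓ'
            = ((W (j, ⟨ℓ.val, h1⟩) ω * W (j, ⟨ℓ'.val, h2⟩) ω : ℝ) : ℂ) := by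
          intro ω; rw [hw, hw, dif_pos h1, dif_pos h2]; push_cast; ring
        simp_rw [he]
        have hIR : ∫ ω, ((W (j, ⟨ℓ.val, h1⟩) ω * W (j, ⟨ℓ'.val, h2⟩) ω : ℝ) : ℂ) ∂μ
            = ((∫ ω, W (j, ⟨ℓ.val, h1⟩) ω * W (j, ⟨ℓ'.val, h2⟩) ω ∂μ : ℝ) : ℂ) :=
          integral_ofReal
        rw [hIR, hpair]
        have hiff : ((j, (⟨ℓ.val, h1⟩ : Fin LK)) = (j, (⟨ℓ'.val, h2⟩ : Fin LK))) ↔ ℓ = ℓ' := by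
          constructor
          · intro h
            exact ZMod.val_injective L (by simpa [Prod.ext_iff, Fin.ext_iff] using h)
          · intro h; subst h; rfl
        by_cases hll : ℓ = ℓ'
        · rw [if_pos (hiff.mpr hll), if_pos ⟨hll, h1⟩]
        · rw [if_neg (fun h => hll (hiff.mp h)), if_neg (fun h => hll h.1)]
          simp
      · have hll : ¬(ℓ = ℓ' ∧ ℓ.val < LK) := by
          rintro ⟨rfl, _⟩; exact h2 h1
        rw [if_neg hll]
        have he : ∀ ω, w ω j ℓ * w ω j ℓ' = 0 := by
          intro ω; rw [hw ω j ℓ', dif_neg h2, mul_zero]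
        simp_rw [he]; exact integral_zero _ _
    · have hll : ¬(ℓ = ℓ' ∧ ℓ.val < LK) := fun h => h1 h.2
      rw [if_neg hll]
      have he : ∀ ω, w ω j ℓ * w ω j ℓ' = 0 := by
        intro ω; rw [hw ω j ℓ, dif_neg h1, zero_mul]
      simp_rw [he]; exact integral_zero _ _
  -- amplitude coefficients
  set A : ZMod L → ZMod L → ℂ := fun ℓ ℓ' =>
    (d : ℂ)⁻¹ * ((s : ℂ) * (s : ℂ)) * (c k ℓ * (starRingEnd ℂ) (c k' ℓ')) with hA
  have hsqrt : (s : ℂ) * (s : ℂ) = ((L : ℂ))⁻¹ := by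
    have hr : s * s = (L : ℝ)⁻¹ := by
      rw [hs, ← mul_inv, Real.mul_self_sqrt (Nat.cast_nonneg L)]
    rw [← Complex.ofReal_mul, hr]
    push_cast
    ring
  -- pointwise expansion of the alias term
  have hpt : ∀ ω, aliasTerm L d M (w ω) n k
      = ∑ p : Fin M × ZMod L × ZMod L,
          A p.2.1 p.2.2 * (w ω p.1 p.2.1 * w ω p.1 p.2.2) := by
    intro ω
    rw [Fintype.sum_prod_type]
    simp_rw [Fintype.sum_prod_type]
    rw [aliasTerm, Finset.mul_sum]
    refine Finset.sum_congr rfl fun j _ => ?_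
    exact expand_aux d s (w ω j) (c k) (c k') (hwre ω j)
  -- compute the integral
  have hI : ∫ ω, aliasTerm L d M (w ω) n k ∂μ
      = ∑ p : Fin M × ZMod L × ZMod L,
          A p.2.1 p.2.2 * (if p.2.1 = p.2.2 ∧ (p.2.1).val < LK then ((σ ^ 2 : ℝ) : ℂ) else 0) := by
    simp_rw [hpt]
    rw [integral_finset_sum _ (fun p _ => (hintw p.1 p.2.1 p.2.2).const_mul _)]
    refine Finset.sum_congr rfl fun p _ => ?_
    rw [integral_const_mul, hkey]
  -- collapse the diagonal
  have hdiag : ∀ ℓ : ZMod L,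
      (∑ ℓ' : ZMod L, A ℓ ℓ' * (if ℓ = ℓ' ∧ ℓ.val < LK then ((σ ^ 2 : ℝ) : ℂ) else 0))
        = if ℓ.val < LK then A ℓ ℓ * ((σ ^ 2 : ℝ) : ℂ) else 0 := by
    intro ℓ
    rw [Finset.sum_eq_single_of_mem ℓ (Finset.mem_univ ℓ)
      (fun b _ hb => by rw [if_neg (fun hx => hb hx.1.symm), mul_zero])]
    by_cases h : ℓ.val < LK <;> simp [h]
  -- the phase identity
  have hLd : L = d * (L / d) := (Nat.div_mul_cancel hdL).symm.trans (Nat.mul_comm _ _)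
  have hdc : (d : ℂ) ≠ 0 := Nat.cast_ne_zero.mpr hd.ne'
  have hec : ((L / d : ℕ) : ℂ) ≠ 0 :=
    Nat.cast_ne_zero.mpr (Nat.div_pos (Nat.le_of_dvd hL0 hdL) hd).ne'
  have hphase : ∀ ℓ : ZMod L, c k ℓ * (starRingEnd ℂ) (c k' ℓ)
      = Complex.exp (-(2 * Real.pi * Complex.I * (ℓ.val : ℂ) * n) / d) := by
    intro ℓ
    obtain ⟨q, hq⟩ : ∃ q : ℤ, (k.val : ℤ) - (k'.val : ℤ) - t = L * q := by
      have e0 : (((k.val : ℤ) - (k'.val : ℤ) - t : ℤ) : ZMod L) = 0 := by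
        rw [hk']
        push_cast
        simp [ZMod.natCast_val]
      exact (ZMod.intCast_zmod_eq_zero_iff_dvd _ _).1 e0
    exact phase_aux L d (L / d) n t k.val k'.val ℓ.val q hLd ht hdc hec hq
  -- main formula
  have hmain : ∫ ω, aliasTerm L d M (w ω) n k ∂μ =
      ((σ ^ 2 * M / (L * d) : ℝ) : ℂ) * ∑ ℓ ∈ Finset.range LK,
        Complex.exp (-(2 * Real.pi * Complex.I * ℓ * n) / (d : ℂ)) := by
    rw [hI, Fintype.sum_prod_type]
    simp_rw [Fintype.sum_prod_type]
    have hstep : ∀ j : Fin M,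
        (∑ ℓ : ZMod L, ∑ ℓ' : ZMod L,
          A ℓ ℓ' * (if ℓ = ℓ' ∧ ℓ.val < LK then ((σ ^ 2 : ℝ) : ℂ) else 0))
        = ∑ m ∈ Finset.range LK,
            (d : ℂ)⁻¹ * ((L : ℂ))⁻¹ *
              Complex.exp (-(2 * Real.pi * Complex.I * (m : ℂ) * n) / d) * ((σ ^ 2 : ℝ) : ℂ) := by
      intro j
      have h1 : (∑ ℓ : ZMod L, ∑ ℓ' : ZMod L,
          A ℓ ℓ' * (if ℓ = ℓ' ∧ ℓ.val < LK then ((σ ^ 2 : ℝ) : ℂ) else 0))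
          = ∑ ℓ : ZMod L, (if ℓ.val < LK then
              (d : ℂ)⁻¹ * ((L : ℂ))⁻¹ *
                Complex.exp (-(2 * Real.pi * Complex.I * (ℓ.val : ℂ) * n) / d) *
                ((σ ^ 2 : ℝ) : ℂ) else 0) := by
        refine Finset.sum_congr rfl fun ℓ _ => ?_
        rw [hdiag ℓ]
        by_cases h : ℓ.val < LK
        · rw [if_pos h, if_pos h]
          simp only [hA]
          rw [hphase ℓ, hsqrt]
        · rw [if_neg h, if_neg h]
      rw [h1]
      have h2 : (∑ ℓ : ZMod L, (if ℓ.val < LK then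
              (d : ℂ)⁻¹ * ((L : ℂ))⁻¹ *
                Complex.exp (-(2 * Real.pi * Complex.I * (ℓ.val : ℂ) * n) / d) *
                ((σ ^ 2 : ℝ) : ℂ) else 0))
          = ∑ m ∈ Finset.range L, (if m < LK then
              (d : ℂ)⁻¹ * ((L : ℂ))⁻¹ *
                Complex.exp (-(2 * Real.pi * Complex.I * (m : ℂ) * n) / d) *
                ((σ ^ 2 : ℝ) : ℂ) else 0) := sumZMod_aux L (fun m => if m < LK then
              (d : ℂ)⁻¹ * ((L : ℂ))⁻¹ *
                Complex.exp (-(2 * Real.pi * Complex.I * (m : ℂ) * n) / d) *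
                ((σ ^ 2 : ℝ) : ℂ) else 0)
      rw [h2, ← Finset.sum_filter]
      congr 1
      ext m
      simp only [Finset.mem_filter, Finset.mem_range]
      omega
    rw [Finset.sum_congr rfl (fun j _ => hstep j)]
    rw [Finset.sum_const, Finset.card_univ, Fintype.card_fin, Finset.mul_sum]
    rw [Finset.smul_sum]
    refine Finset.sum_congr rfl fun m _ => ?_
    rw [nsmul_eq_mul]
    push_cast
    ring
  refine ⟨hmain, fun hdLK => ⟨?_, ?_⟩⟩
  · -- n = 0
    intro hn0
    subst hn0
    rw [hmain]
    have h1 : ∀ m ∈ Finset.range LK,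
        Complex.exp (-(2 * Real.pi * Complex.I * (m : ℂ) * (((0:ℕ)) : ℂ)) / (d : ℂ)) = 1 := by
      intro m _
      norm_num
    rw [Finset.sum_congr rfl h1, Finset.sum_const, Finset.card_range, nsmul_eq_mul, mul_one]
    push_cast
    ring
  · -- 1 ≤ n
    intro hn1
    rw [hmain]
    set z : ℂ := Complex.exp (-(2 * Real.pi * Complex.I * n) / d) with hz
    have hzp : ∀ m : ℕ,
        Complex.exp (-(2 * Real.pi * Complex.I * (m : ℂ) * n) / (d : ℂ)) = z ^ m := by
      intro m
      rw [hz, ← Complex.exp_nat_mul]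
      congr 1
      ring
    have hz1 : z ≠ 1 := by
      intro hzz
      rw [hz, Complex.exp_eq_one_iff] at hzz
      obtain ⟨m, hm⟩ := hzz
      have h3 : (2 * (Real.pi : ℂ) * Complex.I) * (-(n : ℂ))
          = (2 * (Real.pi : ℂ) * Complex.I) * ((m : ℂ) * d) := by
        field_simp at hm
        linear_combination (2 * (Real.pi : ℂ) * Complex.I) * hm
      have h2 : -(n : ℂ) = (m : ℂ) * d := mul_left_cancel₀ Complex.two_pi_I_ne_zero h3
      have h4 : -(n : ℤ) = m * d := by exact_mod_cast h2
      have h5 : (d : ℤ) ∣ (n : ℤ) := ⟨-m, by linarith⟩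
      have h6 : d ∣ n := Int.natCast_dvd_natCast.mp h5
      have := Nat.le_of_dvd (by omega) h6
      omega
    have hzd : z ^ d = 1 := by
      rw [hz, ← Complex.exp_nat_mul]
      have harg : (d : ℂ) * (-(2 * Real.pi * Complex.I * n) / d)
          = ((-(n : ℤ) : ℤ) : ℂ) * (2 * Real.pi * Complex.I) := by
        push_cast
        field_simp
      rw [harg, Complex.exp_int_mul_two_pi_mul_I]
    have hzLK : z ^ LK = 1 := by
      obtain ⟨u, hu⟩ := hdLK
      rw [hu, pow_mul, hzd, one_pow]
    rw [Finset.sum_congr rfl (fun m _ => hzp m), geom_sum_eq hz1, hzLK, sub_self, zero_div,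
      mul_zero]
end
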